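/- Let λ ∈ ℝ and let r : I → ℝ³∖{0} be a non-colliding solution of the Poincaré problem in ℝ³∖{0} with (constant, nonzero) Poincaré vector L. Then for every t ∈ I, the acceleration r̈(t) is a scalar multiple of |r(t)| L − λ r(t), which is (a positive multiple of) the normal vector of the cone {x ∈ ℝ³∖{0} : ⟨x, L⟩ = λ|x|} at the point r(t). Consequently r is a geodesic on this cone: r lies on the cone and its acceleration is everywhere orthogonal to the tangent space of the cone. -/

import Mathlib

open scoped InnerProductSpace

/-- The cross product on Euclidean 3-space. -/
noncomputable def cross3 (x y : EuclideanSpace ℝ (Fin 3)) : EuclideanSpace ℝ (Fin 3) :=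
  (WithLp.equiv 2 (Fin 3 → ℝ)).symm
    ![x 1 * y 2 - x 2 * y 1, x 2 * y 0 - x 0 * y 2, x 0 * y 1 - x 1 * y 0]


lemma inner_cross3_self (x y : EuclideanSpace ℝ (Fin 3)) :
    ⟪x, cross3 x y⟫_ℝ = 0 := by
  simp only [cross3, PiLp.inner_apply, RCLike.inner_apply, conj_trivial,
    Fin.sum_univ_three, WithLp.equiv_symm_apply, PiLp.toLp_apply]
  simp [Matrix.cons_val_zero, Matrix.cons_val_one]
  ring

/-- Let `r` be a non-colliding solution of the Poincaré problem in
`ℝ³ ∖ {0}` with constant, nonzero Poincaré vector `L`. Then for every `t ∈ I` the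
acceleration `r̈(t)` is a scalar multiple of `|r(t)| L − λ r(t)` (the normal vector of
the cone `{x : ⟨x, L⟩ = λ|x|}` at `r(t)`); consequently `r` is a geodesic on this cone:
`r` lies on the cone and its acceleration is orthogonal to the tangent space of the cone
(the orthogonal complement of the gradient `|x| L − λ x`). -/
theorem poincare_geodesic_on_cone
    (lam : ℝ) (I : Set ℝ) (hIopen : IsOpen I) (hIconn : I.OrdConnected)
    (r r' r'' : ℝ → EuclideanSpace ℝ (Fin 3))
    (hne : ∀ t ∈ I, r t ≠ 0)
    (hd1 : ∀ t ∈ I, HasDerivAt r (r' t) t)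
    (hd2 : ∀ t ∈ I, HasDerivAt r' (r'' t) t)
    (hC2 : ContinuousOn r'' I)
    (hode : ∀ t ∈ I, r'' t = (lam / ‖r t‖ ^ 3) • cross3 (r t) (r' t))
    (hnoncoll : ¬ (∀ t ∈ I, ∃ c : ℝ, r' t = c • r t))
    (L : EuclideanSpace ℝ (Fin 3)) (hL0 : L ≠ 0)
    (hL : ∀ t ∈ I, cross3 (r t) (r' t) + (lam / ‖r t‖) • r t = L) :
    ∀ t ∈ I,
      (∃ c : ℝ, r'' t = c • (‖r t‖ • L - lam • r t)) ∧
      ⟪r t, L⟫_ℝ = lam * ‖r t‖ ∧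
      (∀ w : EuclideanSpace ℝ (Fin 3),
        ⟪‖r t‖ • L - lam • r t, w⟫_ℝ = 0 → ⟪r'' t, w⟫_ℝ = 0) := by
  intro t ht
  have hn : ‖r t‖ ≠ 0 := norm_ne_zero_iff.mpr (hne t ht)
  have hcr : cross3 (r t) (r' t) = L - (lam / ‖r t‖) • r t := by
    have := hL t ht; linear_combination (norm := module) this
  have hacc : r'' t = (lam / ‖r t‖ ^ 4) • (‖r t‖ • L - lam • r t) := by
    rw [hode t ht, hcr]
    match_scalars
    all_goals field_simp
    all_goals try ring
    all_goals exact Or.inl trivial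
  refine ⟨⟨_, hacc⟩, ?_, ?_⟩
  · have h1 : ⟪r t, cross3 (r t) (r' t) + (lam / ‖r t‖) • r t⟫_ℝ = ⟪r t, L⟫_ℝ := by
      rw [hL t ht]
    rw [inner_add_right, inner_smul_right, inner_cross3_self,
      real_inner_self_eq_norm_sq] at h1
    rw [← h1]; field_simp; ring
  · intro w hw
    rw [hacc, inner_smul_left, hw]
    simp
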